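/- Let k ≥ 1, let G be a k-edge-connected finite simple graph on V, fix a root r ∈ V, and let S ⊆ V∖{r} be a k-cut. If v and v′ are snug vertices with v, v′ ∈ S such that (S∖{v}, S) are snug shores for v and (S∖{v′}, S) are snug shores for v′, then v = v′. In other words, for every k-cut S ⊆ V∖{r} there is at most one vertex v ∈ S such that (S∖{v}, S) form snug shores for v. -/
import Mathlib


open Finset

variable {V : Type*} [Fintype V] [DecidableEq V]

/-- `Crosses S e`: exactly one endpoint of the edge/link `e` lies in `S`. -/
def Crosses (S : Finset V) (e : Sym2 V) : Prop :=
  ∃ x y : V, e = s(x, y) ∧ x ∈ S ∧ y ∉ S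

instance (S : Finset V) : DecidablePred (Crosses S) := fun e =>
  decidable_of_iff (∃ x y : V, e = s(x, y) ∧ x ∈ S ∧ y ∉ S) Iff.rfl

/-- The cut `δ(S)`: edges of `G` with exactly one endpoint in `S`. -/
def cutEdges (G : SimpleGraph V) [DecidableRel G.Adj] (S : Finset V) :
    Finset (Sym2 V) :=
  G.edgeFinset.filter fun e => Crosses S e

/-- `G` is `k`-edge-connected: every nonempty proper cut has at least `k` crossing edges. -/
def EdgeConnected (G : SimpleGraph V) [DecidableRel G.Adj] (k : ℕ) : Prop :=
  ∀ S : Finset V, S.Nonempty → S ≠ Finset.univ → k ≤ (cutEdges G S).card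

/-- `S` is a `k`-cut: a nonempty proper vertex set with exactly `k` crossing edges. -/
def IsCut (G : SimpleGraph V) [DecidableRel G.Adj] (k : ℕ) (S : Finset V) : Prop :=
  S.Nonempty ∧ S ≠ Finset.univ ∧ (cutEdges G S).card = k

/-- `(S₁, S₂)` are snug shores for `v` (with respect to the root `r`):
two `k`-cuts avoiding `r` with `v ∉ S₁` and `S₂ = S₁ ∪ {v}`. -/
def SnugShores (G : SimpleGraph V) [DecidableRel G.Adj] (k : ℕ) (r v : V)
    (S₁ S₂ : Finset V) : Prop :=
  IsCut G k S₁ ∧ IsCut G k S₂ ∧ r ∉ S₁ ∧ r ∉ S₂ ∧ v ∉ S₁ ∧ S₂ = insert v S₁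

/-- `v` is a snug vertex (with respect to the root `r`). -/
def Snug (G : SimpleGraph V) [DecidableRel G.Adj] (k : ℕ) (r v : V) : Prop :=
  v ≠ r ∧ k + 1 ≤ G.degree v ∧ ∃ S₁ S₂ : Finset V, SnugShores G k r v S₁ S₂

/-- A snug chain: snug vertices `u 0, …, u t` together with `k`-cuts
`S 0, …, S (t+1)` such that `(S i, S (i+1))` are snug shores for `u i`. -/
def IsSnugChain (G : SimpleGraph V) [DecidableRel G.Adj] (k : ℕ) (r : V)
    (t : ℕ) (u : ℕ → V) (S : ℕ → Finset V) : Prop :=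
  ∀ i ≤ t, Snug G k r (u i) ∧ SnugShores G k r (u i) (S i) (S (i + 1))

set_option linter.unusedSectionVars false
set_option linter.unusedVariables false

lemma crosses_iff (S : Finset V) (a b : V) :
    Crosses S s(a,b) ↔ (a ∈ S ∧ b ∉ S) ∨ (b ∈ S ∧ a ∉ S) := by
  constructor
  · rintro ⟨x, y, hxy, hx, hy⟩
    rw [Sym2.eq_iff] at hxy
    rcases hxy with ⟨rfl, rfl⟩ | ⟨rfl, rfl⟩
    · exact Or.inl ⟨hx, hy⟩
    · exact Or.inr ⟨hx, hy⟩
  · rintro (⟨h1, h2⟩ | ⟨h1, h2⟩)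
    · exact ⟨a, b, rfl, h1, h2⟩
    · exact ⟨b, a, Sym2.eq_swap, h1, h2⟩

lemma cut_decomp (G : SimpleGraph V) [DecidableRel G.Adj] (S : Finset V) (v : V)
    (hv : v ∈ S) :
    cutEdges G S = (cutEdges G S).filter (fun e => v ∉ e) ∪
      ((G.neighborFinset v).filter (· ∉ S)).image (fun y => s(v,y)) := by
  ext e
  induction e using Sym2.ind with
  | _ a b =>
    simp only [cutEdges, mem_union, mem_filter, mem_image, SimpleGraph.mem_edgeFinset,
      SimpleGraph.mem_neighborFinset, SimpleGraph.mem_edgeSet, Sym2.mem_iff, crosses_iff]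
    constructor
    · rintro ⟨hadj, hcr⟩
      by_cases hva : v = a ∨ v = b
      · refine Or.inr ?_
        rcases hva with rfl | rfl
        · rcases hcr with ⟨h1, h2⟩ | ⟨h1, h2⟩
          · exact ⟨b, ⟨hadj, h2⟩, rfl⟩
          · exact absurd hv h2
        · rcases hcr with ⟨h1, h2⟩ | ⟨h1, h2⟩
          · exact absurd hv h2
          · exact ⟨a, ⟨hadj.symm, h2⟩, Sym2.eq_swap⟩
      · exact Or.inl ⟨⟨hadj, hcr⟩, hva⟩
    · rintro (⟨⟨hadj, hcr⟩, _⟩ | ⟨y, ⟨hadj, hy⟩, heq⟩)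
      · exact ⟨hadj, hcr⟩
      · rw [Sym2.eq_iff] at heq
        rcases heq with ⟨rfl, rfl⟩ | ⟨rfl, rfl⟩
        · exact ⟨hadj, Or.inl ⟨hv, hy⟩⟩
        · exact ⟨hadj.symm, Or.inr ⟨hv, hy⟩⟩

lemma cut_erase_decomp (G : SimpleGraph V) [DecidableRel G.Adj] (S : Finset V) (v : V)
    (hv : v ∈ S) :
    cutEdges G (S.erase v) = (cutEdges G S).filter (fun e => v ∉ e) ∪
      ((G.neighborFinset v).filter (· ∈ S)).image (fun y => s(v,y)) := by
  ext e
  induction e using Sym2.ind with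
  | _ a b =>
    simp only [cutEdges, mem_union, mem_filter, mem_image, SimpleGraph.mem_edgeFinset,
      SimpleGraph.mem_neighborFinset, SimpleGraph.mem_edgeSet, Sym2.mem_iff, crosses_iff,
      mem_erase]
    constructor
    · rintro ⟨hadj, hcr⟩
      by_cases hva : v = a ∨ v = b
      · refine Or.inr ?_
        rcases hva with rfl | rfl
        · rcases hcr with ⟨⟨h0, h1⟩, h2⟩ | ⟨⟨h0, h1⟩, h2⟩
          · exact absurd rfl h0
          · exact ⟨b, ⟨hadj, h1⟩, rfl⟩
        · rcases hcr with ⟨⟨h0, h1⟩, h2⟩ | ⟨⟨h0, h1⟩, h2⟩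
          · exact ⟨a, ⟨hadj.symm, h1⟩, Sym2.eq_swap⟩
          · exact absurd rfl h0
      · push_neg at hva
        refine Or.inl ⟨⟨hadj, ?_⟩, fun h => h.elim hva.1 hva.2⟩
        rcases hcr with ⟨⟨h0, h1⟩, h2⟩ | ⟨⟨h0, h1⟩, h2⟩
        · exact Or.inl ⟨h1, fun hb => h2 ⟨(Ne.symm hva.2), hb⟩⟩
        · exact Or.inr ⟨h1, fun ha => h2 ⟨(Ne.symm hva.1), ha⟩⟩
    · rintro (⟨⟨hadj, hcr⟩, hne⟩ | ⟨y, ⟨hadj, hy⟩, heq⟩)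
      · push_neg at hne
        refine ⟨hadj, ?_⟩
        rcases hcr with ⟨h1, h2⟩ | ⟨h1, h2⟩
        · exact Or.inl ⟨⟨Ne.symm hne.1, h1⟩, fun hb => h2 hb.2⟩
        · exact Or.inr ⟨⟨Ne.symm hne.2, h1⟩, fun ha => h2 ha.2⟩
      · rw [Sym2.eq_iff] at heq
        rcases heq with ⟨rfl, rfl⟩ | ⟨rfl, rfl⟩
        · exact ⟨hadj, Or.inr ⟨⟨(G.ne_of_adj hadj).symm, hy⟩, by simp⟩⟩
        · exact ⟨hadj.symm, Or.inl ⟨⟨(G.ne_of_adj hadj).symm, hy⟩, by simp⟩⟩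

lemma myImageCard (v : V) (T : Finset V) :
    (T.image (fun y => s(v,y))).card = T.card :=
  Finset.card_image_of_injective _ (fun a b h => by
    rw [Sym2.eq_iff] at h
    rcases h with ⟨-, rfl⟩ | ⟨rfl, rfl⟩ <;> rfl)

lemma disj_aux (G : SimpleGraph V) [DecidableRel G.Adj] (S : Finset V) (v : V) (T : Finset V) :
    Disjoint ((cutEdges G S).filter (fun e => v ∉ e))
      (T.image (fun y => s(v,y))) := by
  rw [Finset.disjoint_right]
  rintro e he hef
  simp only [mem_image] at he
  obtain ⟨y, _, rfl⟩ := he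
  simp at hef

lemma key_card (G : SimpleGraph V) [DecidableRel G.Adj] (S : Finset V) (v : V)
    (hv : v ∈ S) (k : ℕ) (hS : (cutEdges G S).card = k)
    (hSe : (cutEdges G (S.erase v)).card = k) (hdeg : k + 1 ≤ G.degree v) :
    k + 1 ≤ 2 * (((G.neighborFinset v).filter (· ∉ S)).image (fun y => s(v,y))).card := by
  have h1 := cut_decomp G S v hv
  have h2 := cut_erase_decomp G S v hv
  have c1 := congrArg Finset.card h1
  rw [Finset.card_union_of_disjoint (disj_aux G S v _), myImageCard, hS] at c1
  have c2 := congrArg Finset.card h2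
  rw [Finset.card_union_of_disjoint (disj_aux G S v _), myImageCard, hSe] at c2
  have hd : ((G.neighborFinset v).filter (· ∈ S)).card +
      ((G.neighborFinset v).filter (· ∉ S)).card = G.degree v := by
    rw [SimpleGraph.degree]
    exact Finset.card_filter_add_card_filter_not _
  rw [myImageCard]
  omega


/-- For every `k`-cut `S ⊆ V∖{r}` there is at most one vertex `v ∈ S` such that
`(S ∖ {v}, S)` form snug shores for `v`. -/
theorem at_most_one_incoming
    (k : ℕ) (hk : 1 ≤ k) (G : SimpleGraph V) [DecidableRel G.Adj]
    (hG : EdgeConnected G k) (r : V)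
    (S : Finset V) (hS : IsCut G k S) (hrS : r ∉ S)
    (v v' : V) (hv : Snug G k r v) (hv' : Snug G k r v')
    (hvS : v ∈ S) (hv'S : v' ∈ S)
    (h₁ : SnugShores G k r v (S.erase v) S)
    (h₂ : SnugShores G k r v' (S.erase v') S) :
    v = v' := by
  by_contra hne
  have hSk := hS.2.2
  have hk1 := key_card G S v hvS k hSk h₁.1.2.2 hv.2.1
  have hk2 := key_card G S v' hv'S k hSk h₂.1.2.2 hv'.2.1
  -- both images are subsets of cutEdges G S and disjoint
  set A := ((G.neighborFinset v).filter (· ∉ S)).image (fun y => s(v,y)) with hA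
  set B := ((G.neighborFinset v').filter (· ∉ S)).image (fun y => s(v',y)) with hB
  have hAsub : A ⊆ cutEdges G S := by
    intro e he
    simp only [hA, mem_image, mem_filter, SimpleGraph.mem_neighborFinset] at he
    obtain ⟨y, ⟨hadj, hy⟩, rfl⟩ := he
    simp only [cutEdges, mem_filter, SimpleGraph.mem_edgeFinset, SimpleGraph.mem_edgeSet]
    exact ⟨hadj, v, y, rfl, hvS, hy⟩
  have hBsub : B ⊆ cutEdges G S := by
    intro e he
    simp only [hB, mem_image, mem_filter, SimpleGraph.mem_neighborFinset] at he
    obtain ⟨y, ⟨hadj, hy⟩, rfl⟩ := he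
    simp only [cutEdges, mem_filter, SimpleGraph.mem_edgeFinset, SimpleGraph.mem_edgeSet]
    exact ⟨hadj, v', y, rfl, hv'S, hy⟩
  have hdisj : Disjoint A B := by
    rw [Finset.disjoint_left]
    rintro e he he'
    simp only [hA, hB, mem_image, mem_filter, SimpleGraph.mem_neighborFinset] at he he'
    obtain ⟨y, ⟨_, hy⟩, rfl⟩ := he
    obtain ⟨y', ⟨_, hy'⟩, heq⟩ := he'
    rw [Sym2.eq_iff] at heq
    rcases heq with ⟨rfl, rfl⟩ | ⟨rfl, rfl⟩
    · exact hne rfl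
    · exact hy' hvS
  have : A.card + B.card ≤ k := by
    rw [← Finset.card_union_of_disjoint hdisj, ← hSk]
    exact Finset.card_le_card (Finset.union_subset hAsub hBsub)
  omega
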